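/- Let S ⊆ A be a local operator system generating the unital locally C*-algebra A. A linear map π : A → B(H) is an admissible local boundary representation for S if and only if there exist λ₀ ∈ Λ and a boundary representation π_{λ₀} : A_{λ₀} → B(H) for the operator system S_{λ₀} such that π = π_{λ₀} ∘ π^A_{λ₀}. -/

import Mathlib

open scoped ComplexOrder

/-- A C*-seminorm on a complex *-algebra. -/
structure IsCstarSeminorm {A : Type*} [Ring A] [StarRing A] [Algebra ℂ A] (p : A → ℝ) : Prop where
  nonneg : ∀ a, 0 ≤ p a
  map_zero' : p 0 = 0
  add_le : ∀ a b, p (a + b) ≤ p a + p b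
  smul : ∀ (c : ℂ) (a : A), p (c • a) = ‖c‖ * p a
  mul_le : ∀ a b, p (a * b) ≤ p a * p b
  star_eq : ∀ a, p (star a) = p a
  cstar : ∀ a, p (star a * a) = p a ^ 2

/-- The family of canonical C*-seminorms on the matrix algebras `Mₙ(A)` induced by a
C*-seminorm `p` on `A`. -/
structure IsMatrixCstarSeminormFamily {A : Type*} [Ring A] [StarRing A] [Algebra ℂ A]
    (p : A → ℝ) (pn : ∀ n : ℕ, Matrix (Fin n) (Fin n) A → ℝ) : Prop where
  cstar : ∀ n, IsCstarSeminorm (pn n)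
  ker : ∀ n (M : Matrix (Fin n) (Fin n) A), pn n M = 0 ↔ ∀ i j, p (M i j) = 0
  one : ∀ a : A, pn 1 (fun _ _ => a) = p a

/-- `λ`-positivity of a matrix over `A` relative to the matrix seminorm `pn` (at level `λ`):
`M = b*b + c` with `pn c = 0`. -/
def LamPos {A : Type*} [Ring A] [StarRing A]
    (pn : ∀ n : ℕ, Matrix (Fin n) (Fin n) A → ℝ) (n : ℕ)
    (M : Matrix (Fin n) (Fin n) A) : Prop :=
  ∃ x c : Matrix (Fin n) (Fin n) A, pn n c = 0 ∧ M = star x * x + c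

/-- Positivity of a matrix of bounded operators, i.e. positivity in `B(H^{⊕n}) ≅ Mₙ(B(H))`. -/
def MatPosOp {H : Type*} [NormedAddCommGroup H] [InnerProductSpace ℂ H] [CompleteSpace H]
    {n : ℕ} (T : Matrix (Fin n) (Fin n) (H →L[ℂ] H)) : Prop :=
  ∃ X : Matrix (Fin n) (Fin n) (H →L[ℂ] H), T = star X * X

/-- The bounded operator on `H^{⊕n}` (with the `ℓ²`-Hilbert space structure) induced by an
`n × n` matrix of bounded operators on `H`. -/
noncomputable def matOp {H : Type*} [NormedAddCommGroup H] [InnerProductSpace ℂ H]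
    {n : ℕ} (T : Matrix (Fin n) (Fin n) (H →L[ℂ] H)) :
    PiLp 2 (fun _ : Fin n => H) →L[ℂ] PiLp 2 (fun _ : Fin n => H) :=
  ((PiLp.continuousLinearEquiv 2 ℂ (fun _ : Fin n => H)).symm :
      ((_ : Fin n) → H) →L[ℂ] PiLp 2 (fun _ : Fin n => H)) ∘L
    (ContinuousLinearMap.pi fun i => ∑ j, (T i j) ∘L (ContinuousLinearMap.proj j)) ∘L
    ((PiLp.continuousLinearEquiv 2 ℂ (fun _ : Fin n => H)) :
      PiLp 2 (fun _ : Fin n => H) →L[ℂ] ((_ : Fin n) → H))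

/-- A map into `B(H)` has trivial commutant (irreducibility). -/
def HasTrivialCommutant {R H : Type*} [NormedAddCommGroup H] [InnerProductSpace ℂ H]
    (φ : R → (H →L[ℂ] H)) : Prop :=
  ∀ T : H →L[ℂ] H, (∀ a, T * φ a = φ a * T) → ∃ c : ℂ, T = c • (1 : H →L[ℂ] H)

/-- Complete positivity at level `λ` for a linear map defined on all of `A`, with values in
`B(H)`: `λ`-positive matrices go to positive operator matrices, and matrices annihilated by the
`λ`-th matrix seminorm go to zero. -/
def IsLamCPmap {A H : Type*} [Ring A] [StarRing A] [Algebra ℂ A]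
    [NormedAddCommGroup H] [InnerProductSpace ℂ H] [CompleteSpace H]
    (pn : ∀ n : ℕ, Matrix (Fin n) (Fin n) A → ℝ) (φ : A →ₗ[ℂ] (H →L[ℂ] H)) : Prop :=
  (∀ (n : ℕ) (M : Matrix (Fin n) (Fin n) A), LamPos pn n M → MatPosOp (M.map φ)) ∧
  (∀ (n : ℕ) (M : Matrix (Fin n) (Fin n) A), pn n M = 0 → M.map φ = 0)

/-- Complete positivity at level `λ` for a linear map defined on a local operator system
`S ⊆ A`, with values in `B(H)`. -/
def IsLamCPmapOn {A H : Type*} [Ring A] [StarRing A] [Algebra ℂ A]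
    [NormedAddCommGroup H] [InnerProductSpace ℂ H] [CompleteSpace H]
    (pn : ∀ n : ℕ, Matrix (Fin n) (Fin n) A → ℝ) (S : Submodule ℂ A)
    (φ : ↥S →ₗ[ℂ] (H →L[ℂ] H)) : Prop :=
  (∀ (n : ℕ) (M : Matrix (Fin n) (Fin n) ↥S), LamPos pn n (M.map Subtype.val) →
      MatPosOp (M.map fun s => φ s)) ∧
  (∀ (n : ℕ) (M : Matrix (Fin n) (Fin n) ↥S), pn n (M.map Subtype.val) = 0 →
      M.map (fun s => φ s) = 0)

/-- Complete positivity (in the C*-algebraic, purely algebraic sense) of a linear map from a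
ring with involution to `B(H)`: matrices of the form `x*x` are sent to positive operator
matrices. For a C*-algebra this is the usual notion of complete positivity. -/
def IsCstarCPmap {R H : Type*} [Ring R] [StarRing R] [Algebra ℂ R]
    [NormedAddCommGroup H] [InnerProductSpace ℂ H] [CompleteSpace H]
    (φ : R →ₗ[ℂ] (H →L[ℂ] H)) : Prop :=
  ∀ (n : ℕ) (M : Matrix (Fin n) (Fin n) R),
    (∃ x : Matrix (Fin n) (Fin n) R, M = star x * x) → MatPosOp (M.map φ)

/-- A boundary representation (in the sense of Arveson) of a C*-algebra `R` for the operator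
system `T ⊆ R`: an irreducible representation which is the unique unital completely positive
extension of its restriction to `T`. -/
def IsBoundaryRep {R H : Type*} [Ring R] [StarRing R] [Algebra ℂ R]
    [NormedAddCommGroup H] [InnerProductSpace ℂ H] [CompleteSpace H]
    (T : Set R) (ψ : R →⋆ₐ[ℂ] (H →L[ℂ] H)) : Prop :=
  HasTrivialCommutant ⇑ψ ∧
  ∀ χ : R →ₗ[ℂ] (H →L[ℂ] H), χ 1 = 1 → IsCstarCPmap χ → (∀ t ∈ T, χ t = ψ t) →
    ∀ b, χ b = ψ b

/-- An admissible local boundary representation of the locally C*-algebra `A` for the local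
operator system `S ⊆ A`. -/
def IsAdmLocBdryRep {Λ A H : Type*} [Ring A] [StarRing A] [Algebra ℂ A]
    [NormedAddCommGroup H] [InnerProductSpace ℂ H] [CompleteSpace H]
    (p : Λ → A → ℝ) (pn : Λ → ∀ n : ℕ, Matrix (Fin n) (Fin n) A → ℝ)
    (S : Submodule ℂ A) (π : A →⋆ₐ[ℂ] (H →L[ℂ] H)) : Prop :=
  HasTrivialCommutant ⇑π ∧
  ∃ l₀ : Λ, (∀ a, ‖π a‖ ≤ p l₀ a) ∧
    ∀ φ : A →ₗ[ℂ] (H →L[ℂ] H), φ 1 = 1 → (∃ l, IsLamCPmap (pn l) φ) →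
      (∀ a, ‖φ a‖ ≤ p l₀ a) → (∀ s ∈ S, φ s = π s) → ∀ a, φ a = π a

/-- An admissible local completely positive map between local operator systems
`S₁ ⊆ A₁` and `S₂ ⊆ A₂` (same index set `Λ` of seminorms). -/
def IsAdmLocCP {Λ A₁ A₂ : Type*} [Ring A₁] [StarRing A₁] [Algebra ℂ A₁]
    [Ring A₂] [StarRing A₂] [Algebra ℂ A₂]
    (pn₁ : Λ → ∀ n : ℕ, Matrix (Fin n) (Fin n) A₁ → ℝ)
    (pn₂ : Λ → ∀ n : ℕ, Matrix (Fin n) (Fin n) A₂ → ℝ)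
    (S₁ : Submodule ℂ A₁) (S₂ : Submodule ℂ A₂) (φ : ↥S₁ →ₗ[ℂ] ↥S₂) : Prop :=
  ∀ (l : Λ) (n : ℕ) (M : Matrix (Fin n) (Fin n) ↥S₁),
    (LamPos (pn₁ l) n (M.map Subtype.val) →
      LamPos (pn₂ l) n (M.map fun s => ((φ s : ↥S₂) : A₂))) ∧
    (pn₁ l n (M.map Subtype.val) = 0 → pn₂ l n (M.map fun s => ((φ s : ↥S₂) : A₂)) = 0)

/-- A local completely isometric map between local operator systems. -/
def IsLocCompIsometric {Λ A₁ A₂ : Type*} [Ring A₁] [StarRing A₁] [Algebra ℂ A₁]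
    [Ring A₂] [StarRing A₂] [Algebra ℂ A₂]
    (pn₁ : Λ → ∀ n : ℕ, Matrix (Fin n) (Fin n) A₁ → ℝ)
    (pn₂ : Λ → ∀ n : ℕ, Matrix (Fin n) (Fin n) A₂ → ℝ)
    (S₁ : Submodule ℂ A₁) (S₂ : Submodule ℂ A₂) (φ : ↥S₁ →ₗ[ℂ] ↥S₂) : Prop :=
  ∀ (l : Λ) (n : ℕ) (M : Matrix (Fin n) (Fin n) ↥S₁),
    pn₂ l n (M.map fun s => ((φ s : ↥S₂) : A₂)) = pn₁ l n (M.map Subtype.val)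

/-- A completely positive map (algebraic sense) between operator systems `T₁ ⊆ R₁`, `T₂ ⊆ R₂`
sitting in C*-algebras. -/
def IsCstarCPmapOn {R₁ R₂ : Type*} [Ring R₁] [StarRing R₁] [Algebra ℂ R₁]
    [Ring R₂] [StarRing R₂] [Algebra ℂ R₂]
    (T₁ : Submodule ℂ R₁) (T₂ : Submodule ℂ R₂) (ψ : ↥T₁ →ₗ[ℂ] ↥T₂) : Prop :=
  ∀ (n : ℕ) (M : Matrix (Fin n) (Fin n) ↥T₁),
    (∃ x : Matrix (Fin n) (Fin n) R₁, M.map Subtype.val = star x * x) →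
    ∃ y : Matrix (Fin n) (Fin n) R₂, M.map (fun s => ((ψ s : ↥T₂) : R₂)) = star y * y

/-- A local boundary ideal for a local operator system `S ⊆ A`: a closed two-sided *-ideal such
that the quotient map is completely isometric on `S` with respect to the quotient matrix
seminorms. -/
def IsLocBdryIdeal {Λ A : Type*} [Ring A] [StarRing A] [Algebra ℂ A] [TopologicalSpace A]
    (pn : Λ → ∀ n : ℕ, Matrix (Fin n) (Fin n) A → ℝ) (S : Submodule ℂ A)
    (I : Set A) : Prop :=
  (∃ J : TwoSidedIdeal A, (J : Set A) = I) ∧ (∀ a ∈ I, star a ∈ I) ∧ IsClosed I ∧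
  ∀ (l : Λ) (n : ℕ) (M : Matrix (Fin n) (Fin n) ↥S),
    sInf {r : ℝ | ∃ C : Matrix (Fin n) (Fin n) A, (∀ i j, C i j ∈ I) ∧
        r = pn l n (M.map Subtype.val + C)} = pn l n (M.map Subtype.val)


set_option maxHeartbeats 1000000

lemma star_mul_self_entry {R : Type*} [Ring R] [StarRing R] {n : ℕ}
    (X : Matrix (Fin n) (Fin n) R) (i j : Fin n) :
    (star X * X) i j = ∑ k, star (X k i) * X k j := by
  simp [Matrix.mul_apply, Matrix.star_apply]

section Push
variable {A : Type*} [Ring A] [StarRing A] [Algebra ℂ A]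
  {C : Type*} [NormedRing C] [StarRing C] [NormedAlgebra ℂ C]
  {E : Type*} [NormedAddCommGroup E] [NormedSpace ℂ E]

/-- Push a map along a surjective star algebra hom. -/
noncomputable def pushMap (ρ : A →⋆ₐ[ℂ] C) (hρ : Function.Surjective ρ) (φ : A → E) : C → E :=
  fun c => φ (Function.surjInv hρ c)

lemma pushMap_eq (ρ : A →⋆ₐ[ℂ] C) (hρ : Function.Surjective ρ) (φ : A → E)
    (hsub : ∀ x y, φ (x - y) = φ x - φ y)
    (hb : ∀ x, ‖φ x‖ ≤ ‖ρ x‖) (a : A) : pushMap ρ hρ φ (ρ a) = φ a := by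
  have h1 : ρ (Function.surjInv hρ (ρ a) - a) = 0 := by
    simp [map_sub, Function.surjInv_eq hρ]
  have h2 : ‖φ (Function.surjInv hρ (ρ a) - a)‖ ≤ 0 := by
    simpa [h1] using hb (Function.surjInv hρ (ρ a) - a)
  have h3 : φ (Function.surjInv hρ (ρ a)) - φ a = 0 := by
    rw [← hsub]; exact norm_le_zero_iff.mp h2
  exact sub_eq_zero.mp h3

/-- Push a linear map along a surjective star algebra hom. -/
noncomputable def pushLinear (ρ : A →⋆ₐ[ℂ] C) (hρ : Function.Surjective ρ) (φ : A →ₗ[ℂ] E)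
    (hb : ∀ x, ‖φ x‖ ≤ ‖ρ x‖) : C →ₗ[ℂ] E where
  toFun := pushMap ρ hρ φ
  map_add' := by
    intro c c'
    obtain ⟨a, rfl⟩ := hρ c
    obtain ⟨a', rfl⟩ := hρ c'
    have h := pushMap_eq ρ hρ φ (map_sub φ) hb
    show pushMap ρ hρ ⇑φ (ρ a + ρ a') = pushMap ρ hρ ⇑φ (ρ a) + pushMap ρ hρ ⇑φ (ρ a')
    rw [← map_add, h, h, h, map_add]
  map_smul' := by
    intro m c
    obtain ⟨a, rfl⟩ := hρ c
    have h := pushMap_eq ρ hρ φ (map_sub φ) hb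
    show pushMap ρ hρ ⇑φ (m • ρ a) = m • pushMap ρ hρ ⇑φ (ρ a)
    rw [← map_smul, h, h, map_smul]

lemma pushLinear_eq (ρ : A →⋆ₐ[ℂ] C) (hρ : Function.Surjective ρ) (φ : A →ₗ[ℂ] E)
    (hb : ∀ x, ‖φ x‖ ≤ ‖ρ x‖) (a : A) : pushLinear ρ hρ φ hb (ρ a) = φ a :=
  pushMap_eq ρ hρ φ (map_sub φ) hb a

end Push

section PushHom
variable {A : Type*} [Ring A] [StarRing A] [Algebra ℂ A]
  {C : Type*} [NormedRing C] [StarRing C] [NormedAlgebra ℂ C]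
  {H : Type*} [NormedAddCommGroup H] [InnerProductSpace ℂ H] [CompleteSpace H]

/-- Push a star algebra hom along a surjective star algebra hom. -/
noncomputable def pushStarAlgHom (ρ : A →⋆ₐ[ℂ] C) (hρ : Function.Surjective ρ)
    (φ : A →⋆ₐ[ℂ] (H →L[ℂ] H)) (hb : ∀ x, ‖φ x‖ ≤ ‖ρ x‖) : C →⋆ₐ[ℂ] (H →L[ℂ] H) where
  toFun := pushMap ρ hρ φ
  map_one' := by
    have h := pushMap_eq ρ hρ φ (map_sub φ) hb 1
    rw [map_one, map_one] at h
    exact h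
  map_mul' := by
    intro c c'
    obtain ⟨a, rfl⟩ := hρ c
    obtain ⟨a', rfl⟩ := hρ c'
    have h := pushMap_eq ρ hρ φ (map_sub φ) hb
    show pushMap ρ hρ ⇑φ (ρ a * ρ a') = pushMap ρ hρ ⇑φ (ρ a) * pushMap ρ hρ ⇑φ (ρ a')
    rw [← map_mul, h, h, h, map_mul]
  map_zero' := by
    have h := pushMap_eq ρ hρ φ (map_sub φ) hb 0
    rw [map_zero, map_zero] at h
    exact h
  map_add' := by
    intro c c'
    obtain ⟨a, rfl⟩ := hρ c
    obtain ⟨a', rfl⟩ := hρ c'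
    have h := pushMap_eq ρ hρ φ (map_sub φ) hb
    show pushMap ρ hρ ⇑φ (ρ a + ρ a') = pushMap ρ hρ ⇑φ (ρ a) + pushMap ρ hρ ⇑φ (ρ a')
    rw [← map_add, h, h, h, map_add]
  commutes' := by
    intro r
    have h := pushMap_eq ρ hρ φ (map_sub φ) hb
    have e : algebraMap ℂ C r = ρ (algebraMap ℂ A r) := (AlgHomClass.commutes ρ r).symm
    show pushMap ρ hρ ⇑φ (algebraMap ℂ C r) = algebraMap ℂ (H →L[ℂ] H) r
    rw [e, h, AlgHomClass.commutes]
  map_star' := by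
    intro c
    obtain ⟨a, rfl⟩ := hρ c
    have h := pushMap_eq ρ hρ φ (map_sub φ) hb
    show pushMap ρ hρ ⇑φ (star (ρ a)) = star (pushMap ρ hρ ⇑φ (ρ a))
    rw [← map_star, h, h, map_star]

lemma pushStarAlgHom_eq (ρ : A →⋆ₐ[ℂ] C) (hρ : Function.Surjective ρ)
    (φ : A →⋆ₐ[ℂ] (H →L[ℂ] H)) (hb : ∀ x, ‖φ x‖ ≤ ‖ρ x‖) (a : A) :
    pushStarAlgHom ρ hρ φ hb (ρ a) = φ a :=
  pushMap_eq ρ hρ φ (map_sub φ) hb a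

end PushHom

section CP
variable {C : Type*} [NormedRing C] [StarRing C] [CStarRing C]
  [NormedAlgebra ℂ C] [StarModule ℂ C] [CompleteSpace C]
  {H : Type*} [NormedAddCommGroup H] [InnerProductSpace ℂ H] [CompleteSpace H]

lemma cp_pos_bound (χ : C →ₗ[ℂ] (H →L[ℂ] H)) (h1 : χ 1 = 1) (hcp : IsCstarCPmap χ)
    (b : C) (η : H) :
    (inner ℂ η (χ (star b * b) η)).re ≤ ‖b‖ ^ 2 * ‖η‖ ^ 2 := by
  letI : CStarAlgebra C := {}
  letI : PartialOrder C := CStarAlgebra.spectralOrder C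
  letI : StarOrderedRing C := CStarAlgebra.spectralOrderedRing C
  set d : C := algebraMap ℝ C (‖b‖ ^ 2) - star b * b with hd_def
  have hd : (0 : C) ≤ d := sub_nonneg.2 CStarAlgebra.star_mul_le_algebraMap_norm_sq
  have hdc : d = star (CFC.sqrt d) * CFC.sqrt d := by
    rw [(IsSelfAdjoint.of_nonneg (CFC.sqrt_nonneg d)).star_eq, CFC.sqrt_mul_sqrt_self _ hd]
  have hMP : ∃ X : Matrix (Fin 1) (Fin 1) (H →L[ℂ] H),
      (Matrix.of fun _ _ => d).map ⇑χ = star X * X :=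
    hcp 1 (Matrix.of fun _ _ => d) ⟨Matrix.of fun _ _ => CFC.sqrt d, by
      ext i j
      rw [star_mul_self_entry]
      simp [Fin.sum_univ_one, ← hdc]⟩
  obtain ⟨X, hX⟩ := hMP
  have hu : χ d = star (X 0 0) * X 0 0 := by
    have h00 := congrFun (congrFun hX 0) 0
    rw [star_mul_self_entry] at h00
    simpa [Matrix.map_apply, Fin.sum_univ_one] using h00
  have hχd : χ d = ((‖b‖ ^ 2 : ℝ) : ℂ) • (1 : H →L[ℂ] H) - χ (star b * b) := by
    rw [hd_def, map_sub]
    congr 1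
    rw [IsScalarTower.algebraMap_apply ℝ ℂ C, Algebra.algebraMap_eq_smul_one, map_smul, h1]
    rfl
  have hpos : 0 ≤ (inner ℂ η (χ d η)).re := by
    rw [hu]
    have he : (star (X 0 0) * X 0 0 : H →L[ℂ] H) η = star (X 0 0) ((X 0 0) η) := rfl
    rw [he, ContinuousLinearMap.star_eq_adjoint, ContinuousLinearMap.adjoint_inner_right]
    have := inner_self_nonneg (𝕜 := ℂ) (x := (X 0 0) η)
    simpa using this
  have hexp : (inner ℂ η (χ d η)).re
      = ‖b‖ ^ 2 * ‖η‖ ^ 2 - (inner ℂ η (χ (star b * b) η)).re := by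
    rw [hχd]
    simp only [ContinuousLinearMap.sub_apply, ContinuousLinearMap.smul_apply,
      ContinuousLinearMap.one_apply, inner_sub_right, inner_smul_right]
    rw [@inner_self_eq_norm_sq_to_K ℂ]
    simp [Complex.mul_re, ← Complex.ofReal_pow]
  linarith

lemma cp_norm_le (χ : C →ₗ[ℂ] (H →L[ℂ] H)) (h1 : χ 1 = 1) (hcp : IsCstarCPmap χ) (a : C) :
    ‖χ a‖ ≤ ‖a‖ := by
  have hMP : ∃ X : Matrix (Fin 2) (Fin 2) (H →L[ℂ] H),
      (!![1, a; star a, star a * a]).map ⇑χ = star X * X :=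
    hcp 2 !![1, a; star a, star a * a] ⟨!![1, a; 0, 0], by
      ext i j
      rw [star_mul_self_entry]
      fin_cases i <;> fin_cases j <;> simp [Fin.sum_univ_two]⟩
  obtain ⟨X, hX⟩ := hMP
  have hE : ∀ i j, χ (!![1, a; star a, star a * a] i j) = ∑ k, star (X k i) * X k j := by
    intro i j
    have h := congrFun (congrFun hX i) j
    rw [star_mul_self_entry] at h
    simpa [Matrix.map_apply] using h
  have E1 : (∑ k, star (X k 0) * X k 0 : H →L[ℂ] H) = 1 := by
    have h := hE 0 0
    rw [show !![1, a; star a, star a * a] 0 0 = 1 from rfl, h1] at h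
    exact h.symm
  have E2 : (∑ k, star (X k 0) * X k 1 : H →L[ℂ] H) = χ a := by
    have h := hE 0 1
    rw [show !![1, a; star a, star a * a] 0 1 = a from rfl] at h
    exact h.symm
  have E3 : (∑ k, star (X k 1) * X k 1 : H →L[ℂ] H) = χ (star a * a) := by
    have h := hE 1 1
    rw [show !![1, a; star a, star a * a] 1 1 = star a * a from rfl] at h
    exact h.symm
  refine (χ a).opNorm_le_bound (norm_nonneg a) fun η => ?_
  set ζ := (χ a) η with hζdef
  set U : PiLp 2 (fun _ : Fin 2 => H) := WithLp.toLp 2 fun k => (X k 1) η with hU_def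
  set V : PiLp 2 (fun _ : Fin 2 => H) := WithLp.toLp 2 fun k => (X k 0) ζ with hV_def
  have hz : ζ = ∑ k, (star (X k 0)) ((X k 1) η) := by
    rw [hζdef, ← E2]
    simp [ContinuousLinearMap.sum_apply, ContinuousLinearMap.mul_apply]
  have hUV : (inner ℂ U V) = inner ℂ ζ ζ := by
    calc (inner ℂ U V) = ∑ k, (inner ℂ ((X k 1) η) ((X k 0) ζ)) := PiLp.inner_apply U V
      _ = ∑ k, (inner ℂ ((star (X k 0)) ((X k 1) η)) ζ) := by
          refine Finset.sum_congr rfl fun k _ => ?_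
          rw [ContinuousLinearMap.star_eq_adjoint, ContinuousLinearMap.adjoint_inner_left]
      _ = (inner ℂ (∑ k, (star (X k 0)) ((X k 1) η)) ζ) := (sum_inner _ _ _).symm
      _ = inner ℂ ζ ζ := by rw [← hz]
  have hnormsq : ‖ζ‖ ^ 2 ≤ ‖U‖ * ‖V‖ := by
    calc ‖ζ‖ ^ 2 = (inner ℂ ζ ζ).re := by
          have := @inner_self_eq_norm_sq ℂ _ _ _ _ ζ
          simpa using this.symm
      _ = (inner ℂ U V).re := by rw [hUV]
      _ ≤ ‖(inner ℂ U V)‖ := Complex.re_le_norm _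
      _ ≤ ‖U‖ * ‖V‖ := norm_inner_le_norm U V
  have hVn : ‖V‖ ^ 2 = ‖ζ‖ ^ 2 := by
    rw [PiLp.norm_sq_eq_of_L2]
    calc ∑ k, ‖(X k 0) ζ‖ ^ 2
        = ∑ k, (inner ℂ ζ ((star (X k 0) * X k 0) ζ)).re := by
          refine Finset.sum_congr rfl fun k _ => ?_
          rw [ContinuousLinearMap.mul_apply, ContinuousLinearMap.star_eq_adjoint,
            ContinuousLinearMap.adjoint_inner_right]
          have := @inner_self_eq_norm_sq ℂ _ _ _ _ ((X k 0) ζ)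
          simpa using this.symm
      _ = (inner ℂ ζ ((∑ k, star (X k 0) * X k 0) ζ)).re := by
          rw [ContinuousLinearMap.sum_apply, inner_sum, Complex.re_sum]
      _ = ‖ζ‖ ^ 2 := by
          rw [E1, ContinuousLinearMap.one_apply]
          have := @inner_self_eq_norm_sq ℂ _ _ _ _ ζ
          simpa using this
  have hUn : ‖U‖ ^ 2 ≤ ‖a‖ ^ 2 * ‖η‖ ^ 2 := by
    rw [PiLp.norm_sq_eq_of_L2]
    calc ∑ k, ‖(X k 1) η‖ ^ 2
        = ∑ k, (inner ℂ η ((star (X k 1) * X k 1) η)).re := by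
          refine Finset.sum_congr rfl fun k _ => ?_
          rw [ContinuousLinearMap.mul_apply, ContinuousLinearMap.star_eq_adjoint,
            ContinuousLinearMap.adjoint_inner_right]
          have := @inner_self_eq_norm_sq ℂ _ _ _ _ ((X k 1) η)
          simpa using this.symm
      _ = (inner ℂ η ((∑ k, star (X k 1) * X k 1) η)).re := by
          rw [ContinuousLinearMap.sum_apply, inner_sum, Complex.re_sum]
      _ ≤ ‖a‖ ^ 2 * ‖η‖ ^ 2 := by
          rw [E3]
          exact cp_pos_bound χ h1 hcp a η
  have hVζ : ‖V‖ = ‖ζ‖ := (pow_left_inj₀ (norm_nonneg V) (norm_nonneg ζ) two_ne_zero).mp hVn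
  have hUm : ‖U‖ ≤ ‖a‖ * ‖η‖ := by
    have h2 : ‖U‖ ^ 2 ≤ (‖a‖ * ‖η‖) ^ 2 := by rw [mul_pow]; exact hUn
    exact (pow_le_pow_iff_left₀ (norm_nonneg U) (mul_nonneg (norm_nonneg a) (norm_nonneg η))
      two_ne_zero).mp h2
  rcases eq_or_lt_of_le (norm_nonneg ζ) with h0 | h0
  · rw [← h0]
    exact mul_nonneg (norm_nonneg a) (norm_nonneg η)
  · have hfin : ‖ζ‖ * ‖ζ‖ ≤ (‖a‖ * ‖η‖) * ‖ζ‖ := by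
      calc ‖ζ‖ * ‖ζ‖ = ‖ζ‖ ^ 2 := (sq ‖ζ‖).symm
        _ ≤ ‖U‖ * ‖V‖ := hnormsq
        _ = ‖U‖ * ‖ζ‖ := by rw [hVζ]
        _ ≤ (‖a‖ * ‖η‖) * ‖ζ‖ := mul_le_mul_of_nonneg_right hUm (norm_nonneg ζ)
    exact le_of_mul_le_mul_right hfin h0

end CP

/-- `π` is an admissible local boundary representation for `S` iff it factors
through some quotient `A_{λ₀}` as a boundary representation for `S_{λ₀}`. -/
theorem stmt13 {Λ : Type*} [Preorder Λ] {A : Type*} [Ring A] [StarRing A] [Algebra ℂ A] [StarModule ℂ A]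
    {B : Λ → Type*} [∀ l, NormedRing (B l)] [∀ l, StarRing (B l)] [∀ l, CStarRing (B l)]
    [∀ l, NormedAlgebra ℂ (B l)] [∀ l, StarModule ℂ (B l)] [∀ l, CompleteSpace (B l)]
    (p : Λ → A → ℝ) (hp : ∀ l, IsCstarSeminorm (p l))
    (hmono : ∀ ⦃l₁ l₂ : Λ⦄, l₁ ≤ l₂ → ∀ a, p l₁ a ≤ p l₂ a)
    (π : ∀ l, A →⋆ₐ[ℂ] B l) (hsurj : ∀ l, Function.Surjective ⇑(π l))
    (hnorm : ∀ l a, ‖(π l) a‖ = p l a)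
    (pn : Λ → ∀ n : ℕ, Matrix (Fin n) (Fin n) A → ℝ)
    (hpn : ∀ l, IsMatrixCstarSeminormFamily (p l) (pn l))
    (S : Submodule ℂ A) (hSstar : ∀ s ∈ S, star s ∈ S) (hSone : (1 : A) ∈ S)
    [TopologicalSpace A] (hind : Topology.IsInducing (fun a : A => fun l => (π l) a))
    (hgen : closure ((StarAlgebra.adjoin ℂ (S : Set A) : StarSubalgebra ℂ A) : Set A)
      = Set.univ)
    {H : Type*} [NormedAddCommGroup H] [InnerProductSpace ℂ H] [CompleteSpace H]
    (πrep : A →⋆ₐ[ℂ] (H →L[ℂ] H)) :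
    IsAdmLocBdryRep p pn S πrep ↔
      ∃ (l₀ : Λ) (ψ : B l₀ →⋆ₐ[ℂ] (H →L[ℂ] H)),
        IsBoundaryRep (⇑(π l₀) '' (S : Set A)) ψ ∧ ∀ a : A, πrep a = ψ ((π l₀) a) := by
  constructor
  · rintro ⟨hcomm, l₀, hb, huniq⟩
    have hb' : ∀ x, ‖πrep x‖ ≤ ‖(π l₀) x‖ := fun x => by rw [hnorm]; exact hb x
    refine ⟨l₀, pushStarAlgHom (π l₀) (hsurj l₀) πrep hb', ⟨?_, ?_⟩, ?_⟩
    · intro T hT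
      refine hcomm T fun a => ?_
      have h := hT ((π l₀) a)
      rwa [pushStarAlgHom_eq] at h
    · intro χ hχ1 hχcp hχS b
      obtain ⟨a, rfl⟩ := hsurj l₀ b
      set φ : A →ₗ[ℂ] (H →L[ℂ] H) := χ.comp (π l₀).toAlgHom.toLinearMap with hφdef
      have hφa : ∀ x, φ x = χ ((π l₀) x) := fun _ => rfl
      have kerφ : ∀ x : A, p l₀ x = 0 → φ x = 0 := by
        intro x hx
        rw [hφa]
        have hπ0 : (π l₀) x = 0 := by
          have h := hnorm l₀ x; rw [hx] at h; exact norm_eq_zero.mp h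
        rw [hπ0, map_zero]
      have hφcp : IsLamCPmap (pn l₀) φ := by
        constructor
        · intro n M hM
          obtain ⟨x, c, hc, hMeq⟩ := hM
          have hcent : ∀ i j, p l₀ (c i j) = 0 := fun i j => ((hpn l₀).ker n c).mp hc i j
          have hπc : ∀ i j, (π l₀) (c i j) = 0 := by
            intro i j
            have h := hnorm l₀ (c i j); rw [hcent i j] at h; exact norm_eq_zero.mp h
          have hN : M.map ⇑(π l₀) = star (x.map ⇑(π l₀)) * (x.map ⇑(π l₀)) := by
            ext i j
            rw [Matrix.map_apply, hMeq, Matrix.add_apply, map_add, hπc i j, add_zero,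
              star_mul_self_entry, map_sum, star_mul_self_entry]
            refine Finset.sum_congr rfl fun k _ => ?_
            rw [map_mul, map_star, Matrix.map_apply, Matrix.map_apply]
          have hmm : M.map ⇑φ = (M.map ⇑(π l₀)).map ⇑χ := by
            ext i j
            rfl
          rw [hmm]
          exact hχcp n (M.map ⇑(π l₀)) ⟨x.map ⇑(π l₀), hN⟩
        · intro n M hM
          have hent : ∀ i j, p l₀ (M i j) = 0 := fun i j => ((hpn l₀).ker n M).mp hM i j
          refine Matrix.ext fun i j => ?_
          simp only [Matrix.map_apply, Matrix.zero_apply]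
          exact kerφ _ (hent i j)
      have hφb : ∀ x, ‖φ x‖ ≤ p l₀ x := by
        intro x
        rw [hφa, ← hnorm l₀ x]
        exact cp_norm_le χ hχ1 hχcp ((π l₀) x)
      have hφS : ∀ s ∈ S, φ s = πrep s := by
        intro s hs
        rw [hφa, hχS ((π l₀) s) ⟨s, hs, rfl⟩]
        exact pushStarAlgHom_eq _ _ _ _ s
      have hone : φ 1 = 1 := by rw [hφa, map_one, hχ1]
      have heq := huniq φ hone ⟨l₀, hφcp⟩ hφb hφS a
      rw [hφa] at heq
      rw [heq]
      exact (pushStarAlgHom_eq _ _ _ _ a).symm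
    · intro a
      exact (pushStarAlgHom_eq _ _ _ _ a).symm
  · rintro ⟨l₀, ψ, ⟨hψcomm, hψuniq⟩, hfac⟩
    constructor
    · intro T hT
      refine hψcomm T fun b => ?_
      obtain ⟨a, rfl⟩ := hsurj l₀ b
      have h := hT a
      rwa [hfac a] at h
    · refine ⟨l₀, ?_, ?_⟩
      · intro a
        rw [hfac a, ← hnorm l₀ a]
        letI : CStarAlgebra (B l₀) := {}
        exact NonUnitalStarAlgHom.norm_apply_le ψ ((π l₀) a)
      · intro φ hφ1 hφcpL hφb hφS a
        obtain ⟨l, hφcp⟩ := hφcpL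
        have hφb' : ∀ x, ‖φ x‖ ≤ ‖(π l₀) x‖ := fun x => by rw [hnorm]; exact hφb x
        set χ := pushLinear (π l₀) (hsurj l₀) φ hφb' with hχdef
        have hχ : ∀ x, χ ((π l₀) x) = φ x := pushLinear_eq _ _ _ _
        have hker : ∀ x : A, (π l₀) x = 0 → φ x = 0 := by
          intro x hx
          have h := hφb' x; rw [hx, norm_zero] at h; exact norm_le_zero_iff.mp h
        have hχ1 : χ 1 = 1 := by
          have h := hχ 1; rw [map_one] at h; rw [h, hφ1]
        have hχcp : IsCstarCPmap χ := by
          intro n M hM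
          obtain ⟨x, hx⟩ := hM
          set Ma : Matrix (Fin n) (Fin n) A :=
            Matrix.of fun i j => Function.surjInv (hsurj l₀) (M i j) with hMa
          set xa : Matrix (Fin n) (Fin n) A :=
            Matrix.of fun i j => Function.surjInv (hsurj l₀) (x i j) with hxa
          have hMface : ∀ i j, (π l₀) (Ma i j) = M i j := fun i j =>
            Function.surjInv_eq (hsurj l₀) _
          have hxface : ∀ i j, (π l₀) (xa i j) = x i j := fun i j =>
            Function.surjInv_eq (hsurj l₀) _
          have hc : ∀ i j, (π l₀) (Ma i j - (star xa * xa) i j) = 0 := by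
            intro i j
            rw [map_sub, hMface i j, hx, star_mul_self_entry, star_mul_self_entry, map_sum]
            rw [sub_eq_zero]
            refine Finset.sum_congr rfl fun k _ => ?_
            rw [map_mul, map_star, hxface, hxface]
          have hMsplit : M.map ⇑χ = (star xa * xa).map ⇑φ := by
            refine Matrix.ext fun i j => ?_
            rw [Matrix.map_apply, Matrix.map_apply, ← hMface i j, hχ]
            have h0 : φ (Ma i j) - φ ((star xa * xa) i j) = 0 := by
              rw [← map_sub]
              exact hker _ (hc i j)
            exact sub_eq_zero.mp h0
          rw [hMsplit]
          have hl : LamPos (pn l) n (star xa * xa) :=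
            ⟨xa, 0, ((hpn l).cstar n).map_zero', (add_zero _).symm⟩
          exact hφcp.1 n (star xa * xa) hl
        have hχS : ∀ t ∈ ⇑(π l₀) '' (S : Set A), χ t = ψ t := by
          rintro t ⟨s, hs, rfl⟩
          rw [hχ s, hφS s hs, hfac s]
        have heq := hψuniq χ hχ1 hχcp hχS ((π l₀) a)
        rw [hχ a] at heq
        rw [heq, ← hfac a]
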